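/- Let F : T^Y → T^Z be a cover between trees of spheres and let B be a branch at a vertex v which maps to a branch of T^Z. If d is the local degree of the attaching point of the edge of B at v, then the number of critical leaves in B, counted with multiplicity (each leaf a counted with multiplicity deg(a) − 1), equals d − 1. -/

import Mathlib

open scoped Classical

/-- `x` and `y` are on the same side of vertex `v` in the graph `G`
(there is a walk from `x` to `y` avoiding `v`). -/
def SameSide {V : Type*} (G : SimpleGraph V) (v x y : V) : Prop :=
  ∃ p : G.Walk x y, v ∉ p.support

/-- The branch of `s` at the vertex `v`: the connected component of `G − {v}` containing `s`. -/
def Branch {V : Type*} (G : SimpleGraph V) (v s : V) : Set V :=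
  {u | ∃ p : G.Walk s u, v ∉ p.support}

/-- The (open) annulus `]]v₁,v₂[[`, the intersection of the branches `B_{v₁}(v₂)` and
`B_{v₂}(v₁)`. -/
def Annulus {V : Type*} (G : SimpleGraph V) (v₁ v₂ : V) : Set V :=
  Branch G v₁ v₂ ∩ Branch G v₂ v₁

/-- `v` is a leaf of `G` (exactly one neighbour). -/
def IsLf {V : Type*} (G : SimpleGraph V) (v : V) : Prop := ∃! u, G.Adj v u

/-- `A` is a connected component of the subset `S` of vertices of `G`. -/
def IsCompOf {V : Type*} (G : SimpleGraph V) (A S : Set V) : Prop :=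
  A ⊆ S ∧
  (∀ a ∈ A, ∀ b ∈ A, ∃ p : G.Walk a b, ∀ x ∈ p.support, x ∈ S) ∧
  (∀ a ∈ A, ∀ u, (∃ p : G.Walk a u, ∀ x ∈ p.support, x ∈ S) → u ∈ A)

/-- A combinatorial model of a (holomorphic) cover `F : T^Y → T^Z` between trees of spheres:
a map of trees sending leaves to leaves and internal vertices to internal vertices, together
with local degrees `edeg` along edges and degrees `vdeg` of the sphere maps `f_v`, subject to
the fiber-counting condition and the local Riemann–Hurwitz relation (all critical points of
`f_v` are at attaching points of edges, since `f_v : S_v − Y_v → S_{F v} − Z_{F v}` is a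
covering map). -/
structure STCover (V W : Type*) [Fintype V] [Fintype W] where
  TY : SimpleGraph V
  TZ : SimpleGraph W
  treeY : TY.IsTree
  treeZ : TZ.IsTree
  valY : ∀ v : V, IsLf TY v ∨ (∃ a b c : V, a ≠ b ∧ b ≠ c ∧ a ≠ c ∧
    TY.Adj v a ∧ TY.Adj v b ∧ TY.Adj v c)
  F : V → W
  map_adj : ∀ {u v : V}, TY.Adj u v → TZ.Adj (F u) (F v)
  map_leaf : ∀ v : V, IsLf TY v → IsLf TZ (F v)
  map_internal : ∀ v : V, ¬ IsLf TY v → ¬ IsLf TZ (F v)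
  edeg : V → V → ℕ
  edeg_pos : ∀ {u v : V}, TY.Adj u v → 1 ≤ edeg u v
  edeg_symm : ∀ u v : V, edeg u v = edeg v u
  vdeg : V → ℕ
  vdeg_pos : ∀ v : V, 1 ≤ vdeg v
  fiber_sum : ∀ v : V, ∀ w' : W, ¬ IsLf TY v → TZ.Adj (F v) w' →
    ∑ u ∈ Finset.univ.filter (fun u => TY.Adj v u ∧ F u = w'), edeg v u = vdeg v
  RH_local : ∀ v : V, ¬ IsLf TY v →
    ∑ u ∈ Finset.univ.filter (fun u => TY.Adj v u), (edeg v u - 1) = 2 * (vdeg v - 1)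
  leaf_vdeg : ∀ v u : V, IsLf TY v → TY.Adj v u → vdeg v = edeg v u

/-- A critical leaf of a cover between trees of spheres. -/
def STCover.CritLeaf {V W : Type*} [Fintype V] [Fintype W] (C : STCover V W) (v : V) : Prop :=
  IsLf C.TY v ∧ 2 ≤ C.vdeg v

section TreeAux

variable {V : Type*} {G : SimpleGraph V}

lemma tree_path_length (hG : G.IsTree) {u v : V} (p : G.Walk u v) (hp : p.IsPath) :
    p.length = G.dist u v := by
  obtain ⟨q, hq⟩ := (hG.isConnected u v).exists_walk_length_eq_dist
  have h1 : q.bypass.IsPath := q.bypass_isPath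
  have h2 : q.bypass.length ≤ q.length := q.length_bypass_le
  have h3 : G.dist u v ≤ q.bypass.length := SimpleGraph.dist_le _
  have h4 : p = q.bypass := (hG.existsUnique_path u v).unique hp h1
  have h5 : p.length = q.bypass.length := by rw [h4]
  omega

/-- the parent of `u` in the tree `G` rooted at `r`. -/
noncomputable def tpar (G : SimpleGraph V) (r u : V) : V :=
  if h : ∃ x, G.Adj u x ∧ G.dist x r + 1 = G.dist u r then h.choose else u

lemma tpar_root (G : SimpleGraph V) (r : V) : tpar G r r = r := by
  rw [tpar, dif_neg]
  rintro ⟨x, -, hx⟩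
  rw [SimpleGraph.dist_self] at hx
  omega

lemma tpar_spec (hG : G.IsTree) {r u : V} (hur : u ≠ r) :
    G.Adj u (tpar G r u) ∧ G.dist (tpar G r u) r + 1 = G.dist u r := by
  obtain ⟨p, hp, -⟩ := hG.existsUnique_path u r
  obtain ⟨x, hx, q, rfl⟩ := SimpleGraph.Walk.exists_eq_cons_of_ne hur p
  have hq : q.IsPath := hp.of_cons
  have hl1 : q.length = G.dist x r := tree_path_length hG q hq
  have hl2 : (SimpleGraph.Walk.cons hx q).length = G.dist u r := tree_path_length hG _ hp
  rw [SimpleGraph.Walk.length_cons] at hl2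
  have hex : ∃ y, G.Adj u y ∧ G.dist y r + 1 = G.dist u r := ⟨x, hx, by omega⟩
  rw [tpar, dif_pos hex]
  exact hex.choose_spec

lemma tpar_eq (hG : G.IsTree) {r u x : V} (hadj : G.Adj u x)
    (hdist : G.dist x r + 1 = G.dist u r) : tpar G r u = x := by
  have hur : u ≠ r := by
    rintro rfl
    rw [SimpleGraph.dist_self] at hdist
    omega
  have key : ∀ y, G.Adj u y → G.dist y r + 1 = G.dist u r → ∀ z, G.Adj u z →
      G.dist z r + 1 = G.dist u r → y = z := by
    intro y hy hdy z hz hdz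
    have build : ∀ a, (ha : G.Adj u a) → G.dist a r + 1 = G.dist u r →
        ∃ (q : G.Walk a r), (SimpleGraph.Walk.cons ha q).IsPath := by
      intro a ha hda
      obtain ⟨q, hq, -⟩ := hG.existsUnique_path a r
      have hlq : q.length = G.dist a r := tree_path_length hG q hq
      have hu : u ∉ q.support := by
        intro hmem
        have h1 : G.dist u r ≤ (q.dropUntil u hmem).length := SimpleGraph.dist_le _
        have h2 : (q.dropUntil u hmem).length ≤ q.length :=
          SimpleGraph.Walk.length_dropUntil_le q hmem
        omega
      exact ⟨q, hq.cons hu⟩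
    obtain ⟨qy, hqy⟩ := build y hy hdy
    obtain ⟨qz, hqz⟩ := build z hz hdz
    have heq : SimpleGraph.Walk.cons hy qy = SimpleGraph.Walk.cons hz qz :=
      (hG.existsUnique_path u r).unique hqy hqz
    have := congrArg (fun w => SimpleGraph.Walk.getVert w 1) heq
    simpa using this
  have hex : ∃ y, G.Adj u y ∧ G.dist y r + 1 = G.dist u r := ⟨x, hadj, hdist⟩
  rw [tpar, dif_pos hex]
  exact key _ hex.choose_spec.1 hex.choose_spec.2 x hadj hdist

lemma tree_adj_dist (hG : G.IsTree) {r a b : V} (hab : G.Adj a b) :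
    G.dist b r + 1 = G.dist a r ∨ G.dist a r + 1 = G.dist b r := by
  obtain ⟨q, hq, -⟩ := hG.existsUnique_path b r
  have hlq : q.length = G.dist b r := tree_path_length hG q hq
  by_cases ha : a ∈ q.support
  · right
    have h1 : G.dist a r ≤ (q.dropUntil a ha).length := SimpleGraph.dist_le _
    have h2 : (q.takeUntil a ha).length + (q.dropUntil a ha).length = q.length := by
      rw [← SimpleGraph.Walk.length_append, SimpleGraph.Walk.take_spec]
    have h3 : (q.takeUntil a ha).length ≠ 0 := by
      intro h0
      exact hab.ne' (SimpleGraph.Walk.eq_of_length_eq_zero h0)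
    obtain ⟨p, hp, -⟩ := hG.existsUnique_path a r
    have hlp : p.length = G.dist a r := tree_path_length hG p hp
    have h4 : G.dist b r ≤ (SimpleGraph.Walk.cons hab.symm p).length := SimpleGraph.dist_le _
    rw [SimpleGraph.Walk.length_cons] at h4
    omega
  · left
    have hpath : (SimpleGraph.Walk.cons hab q).IsPath := hq.cons ha
    have := tree_path_length hG _ hpath
    rw [SimpleGraph.Walk.length_cons] at this
    omega

lemma tpar_or (hG : G.IsTree) {r a b : V} (hab : G.Adj a b) :
    tpar G r a = b ∨ tpar G r b = a := by
  rcases tree_adj_dist hG (r := r) hab with h | h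
  · exact Or.inl (tpar_eq hG hab h)
  · exact Or.inr (tpar_eq hG hab.symm h)

lemma tpar_not_both (hG : G.IsTree) {r a b : V} (ha : a ≠ r) (hb : b ≠ r)
    (h1 : tpar G r a = b) (h2 : tpar G r b = a) : False := by
  have s1 := (tpar_spec hG (r := r) ha).2
  have s2 := (tpar_spec hG (r := r) hb).2
  rw [h1] at s1
  rw [h2] at s2
  omega

end TreeAux

section BranchAux

variable {V : Type*} {G : SimpleGraph V} {v s : V}

lemma branch_self (hadj : G.Adj v s) : s ∈ Branch G v s :=
  ⟨SimpleGraph.Walk.nil, by simp [hadj.ne]⟩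

lemma branch_not_root : v ∉ Branch G v s := by
  rintro ⟨p, hp⟩
  exact hp p.end_mem_support

lemma branch_ne_root {u : V} (hu : u ∈ Branch G v s) : u ≠ v := by
  rintro rfl; exact branch_not_root hu

lemma branch_extend {u x : V} (hu : u ∈ Branch G v s) (hux : G.Adj u x) (hxv : x ≠ v) :
    x ∈ Branch G v s := by
  obtain ⟨p, hp⟩ := hu
  refine ⟨p.append (SimpleGraph.Walk.cons hux SimpleGraph.Walk.nil), ?_⟩
  rw [SimpleGraph.Walk.mem_support_append_iff]
  rintro (h | h)
  · exact hp h
  · simp at h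
    rcases h with rfl | rfl
    · exact hp p.end_mem_support
    · exact hxv rfl

lemma branch_unique_attach (hG : G.IsTree) (hadj : G.Adj v s) {u : V}
    (hu : u ∈ Branch G v s) (huv : G.Adj u v) : u = s := by
  obtain ⟨p, hp⟩ := hu
  by_contra hus
  have hsu : s ≠ u := fun h => hus h.symm
  have hb : p.bypass.IsPath := p.bypass_isPath
  have hvb : v ∉ p.bypass.support := fun h => hp (SimpleGraph.Walk.support_bypass_subset _ h)
  have hP1 : (SimpleGraph.Walk.cons hadj p.bypass).IsPath := hb.cons hvb
  have hP2 : (SimpleGraph.Walk.cons huv.symm SimpleGraph.Walk.nil).IsPath := by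
    simp [SimpleGraph.Walk.isPath_def, huv.ne']
  have heq := (hG.existsUnique_path v u).unique hP1 hP2
  have := congrArg SimpleGraph.Walk.length heq
  simp at this
  exact hsu this.eq

end BranchAux

lemma sum_sub_one_add_card {α : Type*} {X : Finset α} {f : α → ℕ} (h : ∀ u ∈ X, 1 ≤ f u) :
    (∑ u ∈ X, (f u - 1)) + X.card = ∑ u ∈ X, f u := by
  rw [Finset.card_eq_sum_ones, ← Finset.sum_add_distrib]
  refine Finset.sum_congr rfl fun u hu => ?_
  have := h u hu
  omega

/-- if a branch `B` at `v` (attached by the edge `{v,s}`) maps to a branch, and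
`d` is the local degree of the attaching point of the edge of `B` at `v`, then the number of
critical leaves in `B` counted with multiplicity (`deg(a) − 1` for each leaf `a`) is `d − 1`. -/
theorem stmt9 {V W : Type*} [Fintype V] [Fintype W] (C : STCover V W)
    (v s : V) (hadj : C.TY.Adj v s)
    (hbr : ∃ s' : W, C.F '' Branch C.TY v s = Branch C.TZ (C.F v) s')
    (d : ℕ) (hd : d = C.edeg v s) :
    ∑ u ∈ Finset.univ.filter (fun u => u ∈ Branch C.TY v s ∧ IsLf C.TY u),
      (C.vdeg u - 1) = d - 1 := by
  classical
  obtain ⟨s', hs'⟩ := hbr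
  have hGT : C.TY.IsTree := C.treeY
  have hHT : C.TZ.IsTree := C.treeZ
  set B : Set V := Branch C.TY v s with hB
  set w : W := C.F v with hw
  set pY : V → V := tpar C.TY v with hpY
  set pZ : W → W := tpar C.TZ w with hpZdef
  -- basic facts
  have hW : ∀ u ∈ B, C.F u ≠ w := by
    intro u hu h
    have h1 : C.F u ∈ C.F '' B := Set.mem_image_of_mem _ hu
    rw [hs', h] at h1
    exact branch_not_root h1
  have hne : ∀ u ∈ B, u ≠ v := fun u hu => branch_ne_root hu
  have hadjp : ∀ u ∈ B, C.TY.Adj u (pY u) := fun u hu => (tpar_spec hGT (hne u hu)).1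
  have hsB : s ∈ B := branch_self hadj
  have hpYs : pY s = v := by
    rcases tpar_or hGT (r := v) hadj.symm with h | h
    · exact h
    · rw [tpar_root C.TY v] at h
      exact absurd h.symm hadj.ne'
  have hattach : ∀ u ∈ B, pY u = v → u = s := by
    intro u hu h
    exact branch_unique_attach hGT hadj hu (h ▸ hadjp u hu)
  have hchildB : ∀ u ∈ B, ∀ x : V, C.TY.Adj u x → pY x = u → x ∈ B := by
    intro u hu x hux hpx
    have hxv : x ≠ v := by
      rintro rfl
      rw [hpY, tpar_root] at hpx
      exact hne u hu hpx.symm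
    exact branch_extend hu hux hxv
  have hpYB : ∀ u ∈ B, u ≠ s → pY u ∈ B := by
    intro u hu hus
    refine branch_extend hu (hadjp u hu) fun h => hus (hattach u hu h)
  have hpZadj : ∀ u ∈ B, C.TZ.Adj (C.F u) (pZ (C.F u)) := fun u hu =>
    (tpar_spec hHT (hW u hu)).1
  have hnotbothZ : ∀ u ∈ B, ∀ x ∈ B, pZ (C.F u) = C.F x → pZ (C.F x) = C.F u → False := by
    intro u hu x hx h1 h2
    exact tpar_not_both hHT (hW u hu) (hW x hx) h1 h2
  have hnotbothY : ∀ u ∈ B, ∀ x ∈ B, pY u = x → pY x = u → False := by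
    intro u hu x hx h1 h2
    exact tpar_not_both hGT (hne u hu) (hne x hx) h1 h2
  -- if the parent of `a ∈ B` is `v`, then `pZ (F a) = w`
  have hpZroot : ∀ a ∈ B, pY a = v → pZ (C.F a) = w := by
    intro a ha h
    have hedge : C.TZ.Adj (C.F a) w := by
      have := hadjp a ha
      rw [h] at this
      exact C.map_adj this
    rcases tpar_or hHT (r := w) hedge with h1 | h1
    · exact h1
    · rw [tpar_root C.TZ w] at h1
      exact absurd h1.symm (hW a ha)
  -- finsets
  set S : Finset V := Finset.univ.filter (fun u => u ∈ B) with hSdef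
  set L : Finset V := S.filter (fun u => IsLf C.TY u) with hLdef
  set I : Finset V := S.filter (fun u => ¬ IsLf C.TY u) with hIdef
  set K : Finset V := S.filter (fun u => pY u ∈ B ∧ ¬ IsLf C.TY (pY u)) with hKdef
  have hmemS : ∀ u : V, u ∈ S ↔ u ∈ B := by
    intro u; simp [hSdef]
  have hgoal : Finset.univ.filter (fun u => u ∈ Branch C.TY v s ∧ IsLf C.TY u) = L := by
    ext u
    simp [hLdef, hSdef, ← hB]
  rw [hgoal]
  -- Step 1
  have step1 : ∑ u ∈ S, C.vdeg u = ∑ u ∈ S, C.edeg u (pY u) := by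
    have hjneg : ∀ a ∈ B, ¬(C.F (pY a) = pZ (C.F a)) → pY a ∈ B := by
      intro a ha hc
      have hpYav : pY a ≠ v := by
        intro h
        refine hc ?_
        rw [h, hpZroot a ha h]
      exact branch_extend ha (hadjp a ha) hpYav
    have hchild : ∀ (u x : V), u ∈ B → C.TY.Adj u x → x ≠ pY u → (pY x = u ∧ x ∈ B) := by
      intro u x hu hux hne'
      rcases tpar_or hGT (r := v) hux with h | h
      · exact absurd h.symm hne'
      · exact ⟨h, hchildB u hu x hux h⟩
    have per : ∀ u ∈ S, C.vdeg u =
        ∑ x ∈ Finset.univ.filter (fun x => C.TY.Adj u x ∧ C.F x = pZ (C.F u)), C.edeg u x := by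
      intro u huS
      have hu : u ∈ B := (hmemS u).1 huS
      by_cases hlf : IsLf C.TY u
      · obtain ⟨x₀, hx₀, huniq⟩ := hlf
        have hset : Finset.univ.filter (fun x => C.TY.Adj u x ∧ C.F x = pZ (C.F u)) = {x₀} := by
          ext x
          simp only [Finset.mem_filter, Finset.mem_univ, true_and, Finset.mem_singleton]
          constructor
          · rintro ⟨h1, -⟩
            exact huniq x h1
          · intro hxeq
            rw [hxeq]
            refine ⟨hx₀, ?_⟩
            obtain ⟨y₀, hy₀, yuniq⟩ := C.map_leaf u ⟨x₀, hx₀, huniq⟩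
            rw [yuniq _ (C.map_adj hx₀), yuniq _ (hpZadj u hu)]
        rw [hset, Finset.sum_singleton]
        exact C.leaf_vdeg u x₀ ⟨x₀, hx₀, huniq⟩ hx₀
      · exact (C.fiber_sum u (pZ (C.F u)) hlf (hpZadj u hu)).symm
    rw [Finset.sum_congr rfl per, Finset.sum_sigma']
    refine Finset.sum_nbij' (fun p => if p.2 = pY p.1 then p.1 else p.2)
      (fun a => if C.F (pY a) = pZ (C.F a) then ⟨a, pY a⟩ else ⟨pY a, a⟩)
      ?_ ?_ ?_ ?_ ?_
    · rintro ⟨u, x⟩ hp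
      simp only [Finset.mem_sigma, Finset.mem_filter, Finset.mem_univ, true_and] at hp
      obtain ⟨huS, hux, himg⟩ := hp
      have hu : u ∈ B := (hmemS u).1 huS
      dsimp only
      by_cases hc : x = pY u
      · rw [if_pos hc]
        exact huS
      · rw [if_neg hc]
        obtain ⟨hcc, hxB⟩ := hchild u x hu hux hc
        exact (hmemS x).2 hxB
    · intro a haS
      have ha : a ∈ B := (hmemS a).1 haS
      by_cases hc : C.F (pY a) = pZ (C.F a)
      · rw [if_pos hc, Finset.mem_sigma]
        refine ⟨haS, ?_⟩
        simp only [Finset.mem_filter, Finset.mem_univ, true_and]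
        exact ⟨hadjp a ha, hc⟩
      · rw [if_neg hc, Finset.mem_sigma]
        have hpB : pY a ∈ B := hjneg a ha hc
        refine ⟨(hmemS _).2 hpB, ?_⟩
        simp only [Finset.mem_filter, Finset.mem_univ, true_and]
        refine ⟨(hadjp a ha).symm, ?_⟩
        rcases tpar_or hHT (r := w) (C.map_adj (hadjp a ha).symm) with h | h
        · exact h.symm
        · exact absurd h.symm hc
    · rintro ⟨u, x⟩ hp
      simp only [Finset.mem_sigma, Finset.mem_filter, Finset.mem_univ, true_and] at hp
      obtain ⟨huS, hux, himg⟩ := hp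
      have hu : u ∈ B := (hmemS u).1 huS
      dsimp only
      by_cases hc : x = pY u
      · subst hc
        rw [if_pos rfl, if_pos himg]
      · obtain ⟨hcc, hxB⟩ := hchild u x hu hux hc
        rw [if_neg hc]
        have hcond : ¬ (C.F (pY x) = pZ (C.F x)) := by
          rw [hcc]
          intro h
          exact hnotbothZ u hu x hxB himg.symm h.symm
        rw [if_neg hcond]
        subst hcc
        rfl
    · intro a haS
      have ha : a ∈ B := (hmemS a).1 haS
      by_cases hc : C.F (pY a) = pZ (C.F a)
      · rw [if_pos hc]
        simp
      · rw [if_neg hc]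
        have hpB : pY a ∈ B := hjneg a ha hc
        have hcond : ¬ (a = pY (pY a)) := by
          intro h
          exact hnotbothY a ha (pY a) hpB rfl h.symm
        simp only [if_neg hcond]
    · rintro ⟨u, x⟩ hp
      simp only [Finset.mem_sigma, Finset.mem_filter, Finset.mem_univ, true_and] at hp
      obtain ⟨huS, hux, himg⟩ := hp
      have hu : u ∈ B := (hmemS u).1 huS
      dsimp only
      by_cases hc : x = pY u
      · subst hc
        rw [if_pos rfl]
      · obtain ⟨hcc, hxB⟩ := hchild u x hu hux hc
        rw [if_neg hc, hcc]
        exact C.edeg_symm u x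
  -- Step 2 + 3
  have step23 : ∑ u ∈ I, (C.edeg u (pY u) - 1) + ∑ x ∈ K, (C.edeg x (pY x) - 1)
      = ∑ u ∈ I, 2 * (C.vdeg u - 1) := by
    have hNdecomp : ∀ u ∈ I,
        (∑ x ∈ Finset.univ.filter (fun x => C.TY.Adj u x), (C.edeg u x - 1))
          = (C.edeg u (pY u) - 1) +
            ∑ x ∈ Finset.univ.filter (fun x => C.TY.Adj u x ∧ pY x = u), (C.edeg u x - 1) := by
      intro u huI
      rw [hIdef, Finset.mem_filter] at huI
      have hu : u ∈ B := (hmemS u).1 huI.1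
      have hins : Finset.univ.filter (fun x => C.TY.Adj u x)
          = insert (pY u) (Finset.univ.filter (fun x => C.TY.Adj u x ∧ pY x = u)) := by
        ext x
        simp only [Finset.mem_filter, Finset.mem_univ, true_and, Finset.mem_insert]
        constructor
        · intro hx
          rcases tpar_or hGT (r := v) hx with h | h
          · exact Or.inl h.symm
          · exact Or.inr ⟨hx, h⟩
        · rintro (rfl | ⟨hx, -⟩)
          · exact hadjp u hu
          · exact hx
      have hnotmem : pY u ∉ Finset.univ.filter (fun x => C.TY.Adj u x ∧ pY x = u) := by
        intro hmem
        simp only [Finset.mem_filter, Finset.mem_univ, true_and] at hmem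
        have h2 := hmem.2
        by_cases hpv : pY u = v
        · rw [hpv] at h2
          have h3 : pY v = v := tpar_root C.TY v
          exact hne u hu (h2.symm.trans h3)
        · have hpB : pY u ∈ B := branch_extend hu (hadjp u hu) hpv
          exact hnotbothY u hu (pY u) hpB rfl h2
      rw [hins, Finset.sum_insert hnotmem]
    have hRH : ∑ u ∈ I, 2 * (C.vdeg u - 1)
        = ∑ u ∈ I, ∑ x ∈ Finset.univ.filter (fun x => C.TY.Adj u x), (C.edeg u x - 1) := by
      refine Finset.sum_congr rfl fun u huI => ?_
      rw [hIdef, Finset.mem_filter] at huI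
      exact (C.RH_local u huI.2).symm
    rw [hRH, Finset.sum_congr rfl hNdecomp, Finset.sum_add_distrib]
    congr 1
    rw [Finset.sum_sigma']
    refine Finset.sum_nbij' (fun x => (⟨pY x, x⟩ : (_ : V) × V)) (fun p => p.2)
      ?_ ?_ ?_ ?_ ?_
    · intro x hxK
      rw [hKdef, Finset.mem_filter] at hxK
      obtain ⟨hxS, hpB, hpNL⟩ := hxK
      have hxB : x ∈ B := (hmemS x).1 hxS
      rw [Finset.mem_sigma]
      constructor
      · rw [hIdef, Finset.mem_filter]
        exact ⟨(hmemS _).2 hpB, hpNL⟩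
      · simp only [Finset.mem_filter, Finset.mem_univ, true_and]
        exact ⟨(hadjp x hxB).symm, trivial⟩
    · rintro ⟨u, x⟩ hp
      simp only [Finset.mem_sigma, Finset.mem_filter, Finset.mem_univ, true_and] at hp
      obtain ⟨huI, hux, hpx⟩ := hp
      rw [hIdef, Finset.mem_filter] at huI
      have huB : u ∈ B := (hmemS u).1 huI.1
      have hxB : x ∈ B := hchildB u huB x hux hpx
      dsimp only
      rw [hKdef, Finset.mem_filter, hpx]
      exact ⟨(hmemS x).2 hxB, huB, huI.2⟩
    · intro x _
      rfl
    · rintro ⟨u, x⟩ hp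
      simp only [Finset.mem_sigma, Finset.mem_filter, Finset.mem_univ, true_and] at hp
      obtain ⟨-, -, hpx⟩ := hp
      dsimp only
      subst hpx
      rfl
    · intro x _
      dsimp only
      rw [C.edeg_symm]
  -- Step 4 : S = insert s K
  have hsS : s ∈ S := (hmemS s).2 hsB
  have hsK : s ∉ K := by
    intro h
    rw [hKdef, Finset.mem_filter] at h
    exact branch_not_root (hpYs ▸ h.2.1)
  have hpYnotleaf : ∀ x ∈ B, pY x ∈ B → ¬ IsLf C.TY (pY x) := by
    intro x hx hpx hlf
    obtain ⟨y, hy, yuniq⟩ := hlf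
    have hx1 : x = y := yuniq x (hadjp x hx).symm
    have hx2 : pY (pY x) = y := yuniq _ (hadjp (pY x) hpx)
    have h1 : x = pY (pY x) := hx1.trans hx2.symm
    exact hnotbothY x hx (pY x) hpx rfl h1.symm
  have hKS : insert s K = S := by
    ext x
    simp only [Finset.mem_insert]
    constructor
    · rintro (rfl | h)
      · exact hsS
      · exact Finset.mem_of_mem_filter _ h
    · intro hx
      by_cases hxs : x = s
      · exact Or.inl hxs
      · right
        have hxB : x ∈ B := (hmemS x).1 hx
        have hpB : pY x ∈ B := hpYB x hxB hxs
        rw [hKdef, Finset.mem_filter]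
        exact ⟨hx, hpB, hpYnotleaf x hxB hpB⟩
  -- Step 5 : leaves
  have step5 : ∑ u ∈ L, C.vdeg u = ∑ u ∈ L, C.edeg u (pY u) := by
    refine Finset.sum_congr rfl fun u hu => ?_
    rw [hLdef, Finset.mem_filter] at hu
    exact C.leaf_vdeg u (pY u) hu.2 (hadjp u ((hmemS u).1 hu.1))
  -- arithmetic wrap-up
  have hposv : ∀ u ∈ S, 1 ≤ C.vdeg u := fun u _ => C.vdeg_pos u
  have hpose : ∀ u ∈ S, 1 ≤ C.edeg u (pY u) := fun u hu => C.edeg_pos (hadjp u ((hmemS u).1 hu))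
  have hIsub : I ⊆ S := Finset.filter_subset _ _
  have hLsub : L ⊆ S := Finset.filter_subset _ _
  have hKsub : K ⊆ S := Finset.filter_subset _ _
  have e1 : (∑ u ∈ I, (C.edeg u (pY u) - 1)) + I.card = ∑ u ∈ I, C.edeg u (pY u) :=
    sum_sub_one_add_card fun u hu => hpose u (hIsub hu)
  have e2 : (∑ u ∈ K, (C.edeg u (pY u) - 1)) + K.card = ∑ u ∈ K, C.edeg u (pY u) :=
    sum_sub_one_add_card fun u hu => hpose u (hKsub hu)
  have e3 : (∑ u ∈ I, (C.vdeg u - 1)) + I.card = ∑ u ∈ I, C.vdeg u :=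
    sum_sub_one_add_card fun u hu => hposv u (hIsub hu)
  have e4 : (∑ u ∈ L, (C.vdeg u - 1)) + L.card = ∑ u ∈ L, C.vdeg u :=
    sum_sub_one_add_card fun u hu => hposv u (hLsub hu)
  have e5 : ∑ u ∈ I, 2 * (C.vdeg u - 1) = 2 * ∑ u ∈ I, (C.vdeg u - 1) :=
    (Finset.mul_sum _ _ _).symm
  have e6 : ∑ u ∈ L, C.vdeg u + ∑ u ∈ I, C.vdeg u = ∑ u ∈ S, C.vdeg u :=
    Finset.sum_filter_add_sum_filter_not S _ _
  have e7 : ∑ u ∈ L, C.edeg u (pY u) + ∑ u ∈ I, C.edeg u (pY u) = ∑ u ∈ S, C.edeg u (pY u) :=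
    Finset.sum_filter_add_sum_filter_not S _ _
  have e8 : ∑ u ∈ S, C.edeg u (pY u) = C.edeg s (pY s) + ∑ u ∈ K, C.edeg u (pY u) := by
    rw [← hKS, Finset.sum_insert hsK]
  have e9 : C.edeg s (pY s) = d := by
    rw [hpYs, hd, C.edeg_symm]
  have e10 : S.card = K.card + 1 := by
    rw [← hKS, Finset.card_insert_of_notMem hsK]
  have e11 : L.card + I.card = S.card :=
    Finset.card_filter_add_card_filter_not _
  have e12 : 1 ≤ d := by
    rw [hd]; exact C.edeg_pos hadj
  omega
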